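/- arXiv:2502.10126 — 2 statements merged into one kernel-verified Lean document; each statement's English description precedes it below -/
import Mathlib

section
/- The fuzzy relation φ(w,w') = ⨅_{A∈Ψ} (V_A(w) ↔ V'_A(w')) is the greatest fuzzy relation satisfying both φ⁻¹ ∘ V_A ≤ V'_A and φ ∘ V'_A ≤ V_A for all A ∈ Ψ; i.e., a fuzzy relation ψ satisfies these two conditions for all A ∈ Ψ iff ψ ≤ φ pointwise. -/
theorem greatest_weak_prebisimulation {H : Type*} [Order.Frame H]
    {W W' Ψ : Type*} (V : Ψ → W → H) (V' : Ψ → W' → H)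
    (φ : W × W' → H)
    (hφ : φ = fun p => ⨅ A, (V A p.1 ⇨ V' A p.2) ⊓ (V' A p.2 ⇨ V A p.1))
    (ψ : W × W' → H) :
    ((∀ A, (∀ w', (⨆ w, ψ (w, w') ⊓ V A w) ≤ V' A w') ∧
        (∀ w, (⨆ w', ψ (w, w') ⊓ V' A w') ≤ V A w)) ↔ ψ ≤ φ) := by
  subst hφ
  constructor
  · intro h p
    refine le_iInf fun A => le_inf ?_ ?_
    · exact le_himp_iff.2 (le_trans (le_iSup (fun w => ψ (w, p.2) ⊓ V A w) p.1) ((h A).1 p.2))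
    · exact le_himp_iff.2 (le_trans (le_iSup (fun w' => ψ (p.1, w') ⊓ V' A w') p.2) ((h A).2 p.1))
  · intro h A
    constructor
    · intro w'
      refine iSup_le fun w => ?_
      have := le_trans (h (w, w')) (iInf_le _ A)
      exact le_himp_iff.1 (this.trans inf_le_left)
    · intro w
      refine iSup_le fun w' => ?_
      have := le_trans (h (w, w')) (iInf_le _ A)
      exact le_himp_iff.1 (this.trans inf_le_right)
end

section
/- Let φ : W×W' → H satisfy φ(u,u') ≤ V_B(u) ↔ V'_B(u') for all u ∈ W, u' ∈ W', and φ⁻¹ ∘ R ≤ R' ∘ φ⁻¹ (as fuzzy relations). Define V_{◇B}(u) = ⨆_{v} R(u,v) ∧ V_B(v) and V'_{◇B}(u') = ⨆_{v'} R'(u',v') ∧ V'_B(v'). Then φ(u,u') ≤ V_{◇B}(u) → V'_{◇B}(u') for all u ∈ W, u' ∈ W'. -/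
theorem diamond_forward_step {H : Type*} [Order.Frame H] {W W' : Type*}
    (φ : W × W' → H) (R : W × W → H) (R' : W' × W' → H)
    (VB : W → H) (VB' : W' → H)
    (h1 : ∀ u u', φ (u, u') ≤ (VB u ⇨ VB' u') ⊓ (VB' u' ⇨ VB u))
    (h2 : ∀ u' v, (⨆ u, φ (u, u') ⊓ R (u, v)) ≤ ⨆ v', R' (u', v') ⊓ φ (v, v')) :
    ∀ u u', φ (u, u') ≤ (⨆ v, R (u, v) ⊓ VB v) ⇨ (⨆ v', R' (u', v') ⊓ VB' v') := by
  intro u u'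
  rw [le_himp_iff, inf_iSup_eq]
  refine iSup_le fun v => ?_
  have step1 : φ (u, u') ⊓ R (u, v) ≤ ⨆ v', R' (u', v') ⊓ φ (v, v') :=
    (le_iSup (fun w => φ (w, u') ⊓ R (w, v)) u).trans (h2 u' v)
  calc φ (u, u') ⊓ (R (u, v) ⊓ VB v)
      = (φ (u, u') ⊓ R (u, v)) ⊓ VB v := by rw [inf_assoc]
    _ ≤ (⨆ v', R' (u', v') ⊓ φ (v, v')) ⊓ VB v := inf_le_inf_right _ step1
    _ = ⨆ v', R' (u', v') ⊓ φ (v, v') ⊓ VB v := by rw [iSup_inf_eq]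
    _ ≤ ⨆ v', R' (u', v') ⊓ VB' v' := by
        refine iSup_mono fun v' => ?_
        rw [inf_assoc]
        refine inf_le_inf_left _ ?_
        have := (h1 v v').trans inf_le_left
        calc φ (v, v') ⊓ VB v ≤ (VB v ⇨ VB' v') ⊓ VB v := inf_le_inf_right _ this
          _ ≤ VB' v' := himp_inf_le
end
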